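/- Cross-domain identification of the conditional expectation (Proposition 4, sufficiency / Corollary 5 T3, equations (6) and (8)): Assume μ and ν admit a common disintegration kernel κ of the outcome given (X,Z), assume the outcome coordinate Y is integrable under both μ and ν, and assume ν_{XZ} ≪ μ_{XZ} (absolute continuity of the target (X,Z)-marginal with respect to the source (X,Z)-marginal). Then for every measurable g : 𝒳 × 𝒵 → ℝ that is a version of the conditional expectation of Y given the (X,Z)-coordinates under μ (a source-domain regression function), the function (x,z,y) ↦ g(x,z) is also a version of the conditional expectation of Y given the (X,Z)-coordinates under ν, and moreover the conditional expectation of Y given the X-coordinate under ν equals, ν-almost everywhere, the conditional expectation of g(X,Z) given the X-coordinate under ν. In particular the target-domain regression function E_ν[Y | X] is obtained by the repeated regression E_ν[E_μ[Y | X, Z] | X]. -/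

import Mathlib

open MeasureTheory ProbabilityTheory

/-- **Cross-domain identification of the conditional expectation**
(Proposition 4, sufficiency / Corollary 5 T3, equations (6) and (8)).

`μ` is the source-domain law and `ν` the target-domain law of `(X, Z, Y)` on
`𝒳 × 𝒵 × ℝ`.  The domain-pivot assumption `Y ⫫ D, Θ | X, Z` is encoded by a
common Markov kernel `κ` disintegrating both `μ` and `ν` over their
`(X, Z)`-marginals.  Assuming the outcome coordinate is integrable under both
laws and `ν_{XZ} ≪ μ_{XZ}`, every measurable version `g` of the source-domain
regression function `E_μ[Y | X, Z]` is also a version of `E_ν[Y | X, Z]`, and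
`E_ν[Y | X] = E_ν[g(X, Z) | X]` holds `ν`-a.e. (repeated regression). -/
theorem cross_domain_identification
    {𝒳 𝒵 : Type*} [MeasurableSpace 𝒳] [StandardBorelSpace 𝒳]
    [MeasurableSpace 𝒵] [StandardBorelSpace 𝒵]
    (μ ν : Measure (𝒳 × 𝒵 × ℝ)) [IsProbabilityMeasure μ] [IsProbabilityMeasure ν]
    (κ : Kernel (𝒳 × 𝒵) ℝ) [IsMarkovKernel κ]
    (hμ : μ = (μ.map (fun ω => (ω.1, ω.2.1)) ⊗ₘ κ).map MeasurableEquiv.prodAssoc)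
    (hν : ν = (ν.map (fun ω => (ω.1, ω.2.1)) ⊗ₘ κ).map MeasurableEquiv.prodAssoc)
    (hYμ : Integrable (fun ω : 𝒳 × 𝒵 × ℝ => ω.2.2) μ)
    (hYν : Integrable (fun ω : 𝒳 × 𝒵 × ℝ => ω.2.2) ν)
    (hac : ν.map (fun ω : 𝒳 × 𝒵 × ℝ => (ω.1, ω.2.1)) ≪
      μ.map (fun ω : 𝒳 × 𝒵 × ℝ => (ω.1, ω.2.1)))
    (g : 𝒳 × 𝒵 → ℝ) (hg : Measurable g)
    (hgμ : (fun ω : 𝒳 × 𝒵 × ℝ => g (ω.1, ω.2.1)) =ᵐ[μ]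
      μ[(fun ω : 𝒳 × 𝒵 × ℝ => ω.2.2) |
        MeasurableSpace.comap (fun ω : 𝒳 × 𝒵 × ℝ => (ω.1, ω.2.1)) inferInstance]) :
    ((fun ω : 𝒳 × 𝒵 × ℝ => g (ω.1, ω.2.1)) =ᵐ[ν]
      ν[(fun ω : 𝒳 × 𝒵 × ℝ => ω.2.2) |
        MeasurableSpace.comap (fun ω : 𝒳 × 𝒵 × ℝ => (ω.1, ω.2.1)) inferInstance]) ∧
    (ν[(fun ω : 𝒳 × 𝒵 × ℝ => ω.2.2) |
        MeasurableSpace.comap (fun ω : 𝒳 × 𝒵 × ℝ => ω.1) inferInstance] =ᵐ[ν]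
      ν[(fun ω : 𝒳 × 𝒵 × ℝ => g (ω.1, ω.2.1)) |
        MeasurableSpace.comap (fun ω : 𝒳 × 𝒵 × ℝ => ω.1) inferInstance]) := by
  have hπ : Measurable (fun ω : 𝒳 × 𝒵 × ℝ => (ω.1, ω.2.1)) :=
    measurable_fst.prodMk (measurable_fst.comp measurable_snd)
  have hYm : Measurable (fun ω : 𝒳 × 𝒵 × ℝ => ω.2.2) :=
    measurable_snd.comp measurable_snd
  set π : 𝒳 × 𝒵 × ℝ → 𝒳 × 𝒵 := fun ω => (ω.1, ω.2.1)
  set Y : 𝒳 × 𝒵 × ℝ → ℝ := fun ω => ω.2.2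
  set F : 𝒳 × 𝒵 → ℝ := fun p => ∫ y, y ∂κ p with hF
  have hFm : StronglyMeasurable F :=
    (measurable_snd.stronglyMeasurable (α := (𝒳 × 𝒵) × ℝ)).integral_kernel_prod_right'
  -- Key: under any probability measure disintegrated by κ, F ∘ π is the regression function
  have key : ∀ (ρ : Measure (𝒳 × 𝒵 × ℝ)), IsProbabilityMeasure ρ →
      ρ = (ρ.map π ⊗ₘ κ).map MeasurableEquiv.prodAssoc →
      Integrable Y ρ →
      ρ[Y | MeasurableSpace.comap π inferInstance] =ᵐ[ρ] fun ω => F (π ω) := by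
    intro ρ _ hρ hint
    have hmapT : ρ.map (fun ω => (π ω, Y ω)) = ρ.map π ⊗ₘ κ := by
      have hTe : (fun ω : 𝒳 × 𝒵 × ℝ => (π ω, Y ω))
          = (MeasurableEquiv.prodAssoc (α := 𝒳) (β := 𝒵) (γ := ℝ)).symm := rfl
      rw [hTe]
      conv_lhs => rw [hρ]
      rw [Measure.map_map (MeasurableEquiv.prodAssoc.symm.measurable)
        (MeasurableEquiv.prodAssoc.measurable)]
      have : (MeasurableEquiv.prodAssoc (α := 𝒳) (β := 𝒵) (γ := ℝ)).symm
          ∘ MeasurableEquiv.prodAssoc = id := by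
        funext p; simp
      rw [this, Measure.map_id]
    have hCD := condDistrib_ae_eq_of_measure_eq_compProd (μ := ρ) π hYm.aemeasurable hmapT
    have hint' : Integrable (fun p : (𝒳 × 𝒵) × ℝ => p.2) (ρ.map (fun ω => (π ω, Y ω))) := by
      rw [integrable_map_measure measurable_snd.aestronglyMeasurable
        (hπ.prodMk hYm).aemeasurable]
      exact hint
    have h1 := condExp_prod_ae_eq_integral_condDistrib' (μ := ρ) (X := π) (Y := Y)
      (f := fun p : (𝒳 × 𝒵) × ℝ => p.2) hπ hYm.aemeasurable hint'
    have h2 : (fun ω => ∫ y, y ∂condDistrib Y π ρ (π ω)) =ᵐ[ρ] fun ω => F (π ω) := by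
      filter_upwards [ae_of_ae_map hπ.aemeasurable hCD] with ω hω
      rw [hF]; rw [hω]
    exact h1.trans h2
  have hkeyμ := key μ inferInstance hμ hYμ
  have hkeyν := key ν inferInstance hν hYν
  -- g = F a.e. [μ.map π]
  have hgFμ : (fun ω => g (π ω)) =ᵐ[μ] fun ω => F (π ω) := hgμ.trans hkeyμ
  have hsm : MeasurableSet {p : 𝒳 × 𝒵 | g p ≠ F p} :=
    (measurableSet_eq_fun hg hFm.measurable).compl
  have hμs : μ.map π {p | g p ≠ F p} = 0 := by
    rw [Measure.map_apply hπ hsm]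
    exact hgFμ
  have hνs : ν.map π {p | g p ≠ F p} = 0 := hac hμs
  have hgFν : (fun ω => g (π ω)) =ᵐ[ν] fun ω => F (π ω) := by
    have := Measure.map_apply hπ hsm ▸ hνs
    exact this
  have part1 : (fun ω : 𝒳 × 𝒵 × ℝ => g (ω.1, ω.2.1)) =ᵐ[ν]
      ν[Y | MeasurableSpace.comap π inferInstance] := hgFν.trans hkeyν.symm
  refine ⟨part1, ?_⟩
  have hle : MeasurableSpace.comap (fun ω : 𝒳 × 𝒵 × ℝ => ω.1) inferInstance ≤
      MeasurableSpace.comap π inferInstance := by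
    rintro s ⟨t, ht, rfl⟩
    exact ⟨Prod.fst ⁻¹' t, measurable_fst ht, rfl⟩
  have htower := condExp_condExp_of_le (μ := ν) (f := Y) hle hπ.comap_le
  have hcongr := condExp_congr_ae
    (m := MeasurableSpace.comap (fun ω : 𝒳 × 𝒵 × ℝ => ω.1) inferInstance) (μ := ν) part1
  exact htower.symm.trans hcongr.symm
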